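/- For any nonempty collection C ⊆ D_N and any bijection τ: D_N → D_N, the function x = Σ_{I ∈ C} h_I satisfies ‖x‖_BMO = ⟦C⟧^{1/2} and ‖T_τ x‖_BMO = ⟦τ(C)⟧^{1/2}; hence the operator norm of T_τ on BMO_N is at least sup over nonempty C of (⟦τ(C)⟧/⟦C⟧)^{1/2}. -/

import Mathlib

open Finset

/-- The set of dyadic intervals in `[0,1]` of length `≥ 2^{-N}`, encoded as
pairs `(ℓ, k)` with `ℓ ≤ N` and `k < 2^ℓ`, representing `I_{ℓ,k} = [k/2^ℓ, (k+1)/2^ℓ)`. -/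
def DN (N : ℕ) : Finset (ℕ × ℕ) :=
  (Finset.range (N + 1) ×ˢ Finset.range (2 ^ N)).filter fun p => p.2 < 2 ^ p.1

/-- `subInt q p` means the dyadic interval encoded by `q` is contained in the one
encoded by `p`. -/
def subInt (q p : ℕ × ℕ) : Prop := p.1 ≤ q.1 ∧ q.2 / 2 ^ (q.1 - p.1) = p.2

instance (q p : ℕ × ℕ) : Decidable (subInt q p) :=
  inferInstanceAs (Decidable (_ ∧ _))

/-- Length of the dyadic interval encoded by `p`: `2^{-ℓ}`. -/
noncomputable def len (p : ℕ × ℕ) : ℝ := (2 : ℝ)⁻¹ ^ p.1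

/-- Carleson constant of a finite collection of (encoded) dyadic intervals;
`sSup ∅ = 0` in `ℝ`, so the empty collection gets `0`. -/
noncomputable def carleson (C : Finset (ℕ × ℕ)) : ℝ :=
  sSup {v : ℝ | ∃ p ∈ C, v = (∑ q ∈ C.filter (fun q => subInt q p), len q) / len p}

/-- Squared `BMO_N` norm of a function `x = Σ_{I ∈ D_N} x_I h_I`, given by its
coefficient function: `‖x‖²_BMO = sup_{I ∈ D_N} (1/|I|) Σ_{J ⊆ I} |x_J|² |J|`. -/
noncomputable def bmoSq (N : ℕ) (x : ℕ × ℕ → ℝ) : ℝ :=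
  sSup {v : ℝ | ∃ p ∈ DN N,
    v = (∑ q ∈ (DN N).filter (fun q => subInt q p), (x q) ^ 2 * len q) / len p}

-- ### auxiliary lemmas

lemma mem_DN {N : ℕ} {p : ℕ × ℕ} : p ∈ DN N ↔ p.1 ≤ N ∧ p.2 < 2 ^ p.1 := by
  simp only [DN, Finset.mem_filter, Finset.mem_product, Finset.mem_range]
  constructor
  · rintro ⟨⟨h1, _⟩, h3⟩; exact ⟨by omega, h3⟩
  · rintro ⟨h1, h2⟩
    exact ⟨⟨by omega, lt_of_lt_of_le h2 (Nat.pow_le_pow_right (by norm_num) h1)⟩, h2⟩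

lemma subInt_refl (p : ℕ × ℕ) : subInt p p := ⟨le_rfl, by simp⟩

lemma subInt_trans {q r p : ℕ × ℕ} (h1 : subInt q r) (h2 : subInt r p) : subInt q p := by
  obtain ⟨h1a, h1b⟩ := h1; obtain ⟨h2a, h2b⟩ := h2
  refine ⟨h2a.trans h1a, ?_⟩
  have h : q.1 - p.1 = (q.1 - r.1) + (r.1 - p.1) := by omega
  rw [h, pow_add, ← Nat.div_div_eq_div_mul, h1b, h2b]

lemma len_pos (p : ℕ × ℕ) : 0 < len p := by
  unfold len; positivity

lemma nat_div_eq_iff {k m c : ℕ} (hm : 0 < m) : k / m = c ↔ c * m ≤ k ∧ k < (c + 1) * m := by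
  rw [show k / m = c ↔ c ≤ k / m ∧ k / m < c + 1 from by omega,
    Nat.le_div_iff_mul_le hm, Nat.div_lt_iff_lt_mul hm]

def descN (N : ℕ) (p : ℕ × ℕ) : Finset ℕ :=
  (Finset.range (2 ^ N)).filter fun k => k / 2 ^ (N - p.1) = p.2

lemma descN_eq_Ico {N : ℕ} {p : ℕ × ℕ} (hp : p ∈ DN N) :
    descN N p = Finset.Ico (p.2 * 2 ^ (N - p.1)) ((p.2 + 1) * 2 ^ (N - p.1)) := by
  obtain ⟨h1, h2⟩ := mem_DN.mp hp
  have hpow : (0 : ℕ) < 2 ^ (N - p.1) := Nat.pow_pos (by norm_num)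
  have hNsplit : 2 ^ p.1 * 2 ^ (N - p.1) = 2 ^ N := by
    rw [← pow_add]; congr 1; omega
  ext k
  simp only [descN, Finset.mem_filter, Finset.mem_range, Finset.mem_Ico,
    nat_div_eq_iff hpow]
  constructor
  · rintro ⟨_, h3, h4⟩; exact ⟨h3, h4⟩
  · rintro ⟨h3, h4⟩
    refine ⟨lt_of_lt_of_le h4 ?_, h3, h4⟩
    calc (p.2 + 1) * 2 ^ (N - p.1) ≤ 2 ^ p.1 * 2 ^ (N - p.1) :=
          Nat.mul_le_mul_right _ (by omega)
      _ = 2 ^ N := hNsplit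

lemma descN_card {N : ℕ} {p : ℕ × ℕ} (hp : p ∈ DN N) :
    (descN N p).card = 2 ^ (N - p.1) := by
  rw [descN_eq_Ico hp, Nat.card_Ico, add_mul, one_mul, Nat.add_sub_cancel_left]

lemma len_eq_card {N : ℕ} {p : ℕ × ℕ} (hp : p ∈ DN N) :
    len p = ((descN N p).card : ℝ) * (2 : ℝ)⁻¹ ^ N := by
  have h1 := (mem_DN.mp hp).1
  rw [descN_card hp]
  have hN : N = (N - p.1) + p.1 := by omega
  unfold len
  push_cast
  symm
  calc ((2:ℝ) ^ (N - p.1)) * (2:ℝ)⁻¹ ^ N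
      = (2:ℝ) ^ (N - p.1) * ((2:ℝ)⁻¹ ^ (N - p.1) * (2:ℝ)⁻¹ ^ p.1) := by
        rw [← pow_add, ← hN]
    _ = ((2:ℝ) * 2⁻¹) ^ (N - p.1) * (2:ℝ)⁻¹ ^ p.1 := by rw [mul_pow]; ring
    _ = (2:ℝ)⁻¹ ^ p.1 := by norm_num

lemma descN_subset {N : ℕ} {r p : ℕ × ℕ} (hr : r.1 ≤ N) (h : subInt r p) :
    descN N r ⊆ descN N p := by
  intro k hk
  simp only [descN, Finset.mem_filter, Finset.mem_range] at hk ⊢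
  refine ⟨hk.1, ?_⟩
  have hp1 : p.1 ≤ r.1 := h.1
  have hs : N - p.1 = (N - r.1) + (r.1 - p.1) := by omega
  rw [hs, pow_add, ← Nat.div_div_eq_div_mul, hk.2, h.2]

lemma descN_comparable {N : ℕ} {r r' : ℕ × ℕ} {k : ℕ} (hr' : r'.1 ≤ N)
    (h : r.1 ≤ r'.1) (hk : k ∈ descN N r) (hk' : k ∈ descN N r') : subInt r' r := by
  simp only [descN, Finset.mem_filter, Finset.mem_range] at hk hk'
  refine ⟨h, ?_⟩
  have hs : N - r.1 = (N - r'.1) + (r'.1 - r.1) := by omega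
  rw [← hk'.2, Nat.div_div_eq_div_mul, ← pow_add, ← hs]
  exact hk.2

lemma sum_len_le {N : ℕ} {p : ℕ × ℕ} (hp : p ∈ DN N) (T : Finset (ℕ × ℕ))
    (hT : T ⊆ DN N) (hsub : ∀ r ∈ T, subInt r p)
    (hdisj : ∀ r ∈ T, ∀ r' ∈ T, r ≠ r' → Disjoint (descN N r) (descN N r')) :
    ∑ r ∈ T, len r ≤ len p := by
  have hsum : ∑ r ∈ T, len r = ((T.biUnion (descN N)).card : ℝ) * (2 : ℝ)⁻¹ ^ N := by
    rw [Finset.card_biUnion hdisj]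
    push_cast
    rw [Finset.sum_mul]
    exact Finset.sum_congr rfl fun r hr => len_eq_card (hT hr)
  rw [hsum, len_eq_card hp]
  have hss : T.biUnion (descN N) ⊆ descN N p :=
    Finset.biUnion_subset.mpr fun r hr =>
      descN_subset (mem_DN.mp (hT hr)).1 (hsub r hr)
  have := Finset.card_le_card hss
  gcongr

def maxAnc (A : Finset (ℕ × ℕ)) (p q : ℕ × ℕ) : ℕ × ℕ :=
  if h : ((Finset.range (q.1 + 1)).filter
      (fun ℓ => p.1 ≤ ℓ ∧ (ℓ, q.2 / 2 ^ (q.1 - ℓ)) ∈ A)).Nonempty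
  then ((Finset.min' _ h), q.2 / 2 ^ (q.1 - Finset.min' _ h))
  else q

lemma maxAnc_spec {A : Finset (ℕ × ℕ)} {p q : ℕ × ℕ} (hq : q ∈ A) (hqp : subInt q p)
    (hA : ∀ r ∈ A, subInt r p) :
    maxAnc A p q ∈ A ∧ subInt q (maxAnc A p q) ∧
      ∀ r ∈ A, subInt (maxAnc A p q) r → r = maxAnc A p q := by
  classical
  set L := (Finset.range (q.1 + 1)).filter
      (fun ℓ => p.1 ≤ ℓ ∧ (ℓ, q.2 / 2 ^ (q.1 - ℓ)) ∈ A) with hL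
  have hq1 : q.1 ∈ L := by
    simp only [hL, Finset.mem_filter, Finset.mem_range]
    refine ⟨by omega, hqp.1, ?_⟩
    simpa using hq
  have hne : L.Nonempty := ⟨q.1, hq1⟩
  have hms : maxAnc A p q = (L.min' hne, q.2 / 2 ^ (q.1 - L.min' hne)) := by
    rw [maxAnc, dif_pos]
  set ℓ₀ := L.min' hne with hℓ₀
  have hmem : ℓ₀ ∈ L := Finset.min'_mem _ _
  simp only [hL, Finset.mem_filter, Finset.mem_range] at hmem
  obtain ⟨hlt, hple, hinA⟩ := hmem
  have hsub : subInt q (maxAnc A p q) := by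
    rw [hms]; exact ⟨by omega, rfl⟩
  refine ⟨by rw [hms]; exact hinA, hsub, ?_⟩
  intro r hr hsr
  have hqr : subInt q r := subInt_trans hsub hsr
  have hr1 : r.1 ∈ L := by
    simp only [hL, Finset.mem_filter, Finset.mem_range]
    refine ⟨by have := hqr.1; omega, (hA r hr).1, ?_⟩
    have : (r.1, q.2 / 2 ^ (q.1 - r.1)) = r := by
      have := hqr.2; exact Prod.ext rfl this
    rw [this]; exact hr
  have h1 : ℓ₀ ≤ r.1 := Finset.min'_le _ _ hr1
  have h2 : r.1 ≤ ℓ₀ := by have := hsr.1; rw [hms] at this; exact this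
  have hr1eq : r.1 = ℓ₀ := le_antisymm h2 h1
  rw [hms]
  refine Prod.ext hr1eq ?_
  have := hqr.2
  rw [hr1eq] at this
  exact this.symm ▸ rfl

lemma carleson_bdd (C : Finset (ℕ × ℕ)) :
    BddAbove {v : ℝ | ∃ p ∈ C, v = (∑ q ∈ C.filter (fun q => subInt q p), len q) / len p} := by
  have : {v : ℝ | ∃ p ∈ C, v = (∑ q ∈ C.filter (fun q => subInt q p), len q) / len p}
      = (fun p => (∑ q ∈ C.filter (fun q => subInt q p), len q) / len p) '' ↑C := by
    ext v; simp [eq_comm]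
  rw [this]
  exact (C.finite_toSet.image _).bddAbove

lemma le_carleson {C : Finset (ℕ × ℕ)} {p : ℕ × ℕ} (hp : p ∈ C) :
    (∑ q ∈ C.filter (fun q => subInt q p), len q) / len p ≤ carleson C :=
  le_csSup (carleson_bdd C) ⟨p, hp, rfl⟩

lemma one_le_carleson {C : Finset (ℕ × ℕ)} (hne : C.Nonempty) : 1 ≤ carleson C := by
  obtain ⟨p, hp⟩ := hne
  refine le_trans ?_ (le_carleson hp)
  rw [le_div_iff₀ (len_pos p), one_mul]
  exact Finset.single_le_sum (fun q _ => (len_pos q).le)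
    (Finset.mem_filter.mpr ⟨hp, subInt_refl p⟩)

lemma key_carleson {N : ℕ} {C : Finset (ℕ × ℕ)} (hC : C ⊆ DN N) (hne : C.Nonempty)
    {p : ℕ × ℕ} (hp : p ∈ DN N) :
    (∑ q ∈ C.filter (fun q => subInt q p), len q) ≤ carleson C * len p := by
  classical
  have hcar0 : (0:ℝ) ≤ carleson C := le_trans zero_le_one (one_le_carleson hne)
  set A := C.filter (fun q => subInt q p) with hAdef
  have hAp : ∀ r ∈ A, subInt r p := fun r hr => (Finset.mem_filter.mp hr).2
  have hAC : ∀ r ∈ A, r ∈ C := fun r hr => (Finset.mem_filter.mp hr).1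
  set m := maxAnc A p with hm
  have hspec : ∀ q ∈ A, m q ∈ A ∧ subInt q (m q) ∧
      ∀ r ∈ A, subInt (m q) r → r = m q :=
    fun q hq => maxAnc_spec hq (hAp q hq) hAp
  have hmaps : ∀ q ∈ A, m q ∈ A.image m := fun q hq => Finset.mem_image_of_mem m hq
  rw [← Finset.sum_fiberwise_of_maps_to hmaps len]
  have himgA : ∀ r ∈ A.image m, r ∈ A := by
    intro r hr
    obtain ⟨q, hq, rfl⟩ := Finset.mem_image.mp hr
    exact (hspec q hq).1
  calc ∑ r ∈ A.image m, ∑ q ∈ A.filter (fun q => m q = r), len q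
      ≤ ∑ r ∈ A.image m, carleson C * len r := by
        apply Finset.sum_le_sum
        intro r hr
        have hrA : r ∈ A := himgA r hr
        have hrC : r ∈ C := hAC r hrA
        have h1 : ∑ q ∈ A.filter (fun q => m q = r), len q
            ≤ ∑ q ∈ C.filter (fun q => subInt q r), len q := by
          apply Finset.sum_le_sum_of_subset_of_nonneg
          · intro q hq
            obtain ⟨hqA, hqm⟩ := Finset.mem_filter.mp hq
            exact Finset.mem_filter.mpr ⟨hAC q hqA, hqm ▸ (hspec q hqA).2.1⟩
          · intros q _ _; exact (len_pos q).le
        have h2 : ∑ q ∈ C.filter (fun q => subInt q r), len q ≤ carleson C * len r := by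
          have h := le_carleson hrC
          rw [div_le_iff₀ (len_pos r)] at h
          linarith
        linarith
    _ = carleson C * ∑ r ∈ A.image m, len r := (Finset.mul_sum _ _ _).symm
    _ ≤ carleson C * len p := by
        apply mul_le_mul_of_nonneg_left _ hcar0
        apply sum_len_le hp _ (fun r hr => hC (hAC r (himgA r hr)))
          (fun r hr => hAp r (himgA r hr))
        intro r hr r' hr' hrr'
        rw [Finset.disjoint_left]
        intro k hk hk'
        obtain ⟨q, hq, rfl⟩ := Finset.mem_image.mp hr
        obtain ⟨q', hq', rfl⟩ := Finset.mem_image.mp hr'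
        have hrN : (m q).1 ≤ N := (mem_DN.mp (hC (hAC _ (hspec q hq).1))).1
        have hr'N : (m q').1 ≤ N := (mem_DN.mp (hC (hAC _ (hspec q' hq').1))).1
        rcases le_total (m q).1 (m q').1 with hle | hle
        · have hcomp : subInt (m q') (m q) := descN_comparable hr'N hle hk hk'
          exact hrr' ((hspec q' hq').2.2 _ (hspec q hq).1 hcomp)
        · have hcomp : subInt (m q) (m q') := descN_comparable hrN hle hk' hk
          exact hrr' ((hspec q hq).2.2 _ (hspec q' hq').1 hcomp).symm

lemma bmoSq_indicator {N : ℕ} {C : Finset (ℕ × ℕ)} (hC : C ⊆ DN N) (hne : C.Nonempty) :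
    bmoSq N (fun p => if p ∈ C then 1 else 0) = carleson C := by
  classical
  have hsum : ∀ p : ℕ × ℕ,
      ∑ q ∈ (DN N).filter (fun q => subInt q p),
        ((fun p => if p ∈ C then (1:ℝ) else 0) q) ^ 2 * len q
      = ∑ q ∈ C.filter (fun q => subInt q p), len q := by
    intro p
    have hfilt : ((DN N).filter (fun q => subInt q p)).filter (fun q => q ∈ C)
        = C.filter (fun q => subInt q p) := by
      ext q
      simp only [Finset.mem_filter]
      constructor
      · rintro ⟨⟨_, h2⟩, h3⟩; exact ⟨h3, h2⟩
      · rintro ⟨h1, h2⟩; exact ⟨⟨hC h1, h2⟩, h1⟩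
    calc ∑ q ∈ (DN N).filter (fun q => subInt q p),
          ((fun p => if p ∈ C then (1:ℝ) else 0) q) ^ 2 * len q
        = ∑ q ∈ (DN N).filter (fun q => subInt q p),
            (if q ∈ C then len q else 0) := by
          refine Finset.sum_congr rfl fun q _ => ?_
          simp only
          split_ifs <;> ring
      _ = ∑ q ∈ ((DN N).filter (fun q => subInt q p)).filter (fun q => q ∈ C), len q :=
          (Finset.sum_filter _ _).symm
      _ = ∑ q ∈ C.filter (fun q => subInt q p), len q := by rw [hfilt]
  have hbddD : BddAbove {v : ℝ | ∃ p ∈ DN N,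
      v = (∑ q ∈ (DN N).filter (fun q => subInt q p),
        ((fun p => if p ∈ C then (1:ℝ) else 0) q) ^ 2 * len q) / len p} := by
    have : {v : ℝ | ∃ p ∈ DN N,
        v = (∑ q ∈ (DN N).filter (fun q => subInt q p),
          ((fun p => if p ∈ C then (1:ℝ) else 0) q) ^ 2 * len q) / len p}
        = (fun p => (∑ q ∈ (DN N).filter (fun q => subInt q p),
            ((fun p => if p ∈ C then (1:ℝ) else 0) q) ^ 2 * len q) / len p) '' ↑(DN N) := by
      ext v; simp [eq_comm]
    rw [this]
    exact ((DN N).finite_toSet.image _).bddAbove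
  obtain ⟨p₀, hp₀⟩ := hne
  unfold bmoSq carleson
  apply le_antisymm
  · refine csSup_le ⟨_, p₀, hC hp₀, rfl⟩ ?_
    rintro v ⟨p, hp, rfl⟩
    rw [hsum p, div_le_iff₀ (len_pos p)]
    exact key_carleson hC ⟨p₀, hp₀⟩ hp
  · refine csSup_le ⟨_, p₀, hp₀, rfl⟩ ?_
    rintro v ⟨p, hp, rfl⟩
    exact le_csSup hbddD ⟨p, hC hp, by rw [hsum p]⟩


/-- For nonempty `C ⊆ D_N` and a bijection `τ` of `D_N`, the function
`x = Σ_{I ∈ C} h_I` satisfies `‖x‖²_BMO = ⟦C⟧` and `‖T_τ x‖²_BMO = ⟦τ(C)⟧`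
(here `T_τ x = Σ_{I ∈ C} h_{τ(I)}` has coefficients the indicator of `τ(C)`);
hence any bound `M` for the operator norm of `T_τ` on `BMO_N` satisfies
`(⟦τ(C)⟧/⟦C⟧)^{1/2} ≤ M`. -/
theorem rearrangement_bmo_lower (N : ℕ) (τ : ℕ × ℕ → ℕ × ℕ)
    (hbij : Set.BijOn τ (DN N) (DN N))
    (C : Finset (ℕ × ℕ)) (hC : C ⊆ DN N) (hne : C.Nonempty) :
    bmoSq N (fun p => if p ∈ C then 1 else 0) = carleson C ∧
    bmoSq N (fun p => if p ∈ C.image τ then 1 else 0) = carleson (C.image τ) ∧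
    ∀ M : ℝ, 0 ≤ M →
      (∀ x y : ℕ × ℕ → ℝ, (∀ p ∈ DN N, y (τ p) = x p) →
        bmoSq N y ≤ M ^ 2 * bmoSq N x) →
      Real.sqrt (carleson (C.image τ) / carleson C) ≤ M := by
  classical
  have hC' : C.image τ ⊆ DN N := by
    intro r hr
    obtain ⟨c, hc, rfl⟩ := Finset.mem_image.mp hr
    exact hbij.mapsTo (hC hc)
  have hne' : (C.image τ).Nonempty := hne.image τ
  refine ⟨bmoSq_indicator hC hne, bmoSq_indicator hC' hne', ?_⟩
  intro M hM hop
  have hxy : ∀ p ∈ DN N,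
      (fun p => if p ∈ C.image τ then (1:ℝ) else 0) (τ p)
      = (fun p => if p ∈ C then (1:ℝ) else 0) p := by
    intro p hp
    simp only
    by_cases h : p ∈ C
    · rw [if_pos h, if_pos (Finset.mem_image_of_mem τ h)]
    · rw [if_neg h, if_neg ?_]
      intro hmem
      obtain ⟨c, hc, hcp⟩ := Finset.mem_image.mp hmem
      exact h ((hbij.injOn (hC hc) hp hcp) ▸ hc)
  have h := hop (fun p => if p ∈ C then (1:ℝ) else 0) (fun p => if p ∈ C.image τ then (1:ℝ) else 0) hxy
  rw [bmoSq_indicator hC hne, bmoSq_indicator hC' hne'] at h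
  have h1 : (1:ℝ) ≤ carleson C := one_le_carleson hne
  have hpos : 0 < carleson C := by linarith
  have hdiv : carleson (C.image τ) / carleson C ≤ M ^ 2 := by
    rw [div_le_iff₀ hpos]; linarith
  calc Real.sqrt (carleson (C.image τ) / carleson C)
      ≤ Real.sqrt (M ^ 2) := Real.sqrt_le_sqrt hdiv
    _ = M := by rw [Real.sqrt_sq hM]
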